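/- Let p be a prime, e ≥ 1, q = p^e, and let a, b be natural numbers with a ≥ 1 and b ≤ e−1. Set g := a·p^{(a+1)e−b} − (q^{a+1}−1)/(q−1). Then g cannot be written as Σ_{i=0}^{a} c_i·s_q(a,b,i) with all c_i non-negative integers, while every integer m > g can be written in this form; i.e., g is the Frobenius number of s_q(a,b,0), …, s_q(a,b,a). -/

import Mathlib

open Finset

/-- `s_q(a,b,i)`, with `q = p^e`, written without division:
`s_q(a,b,0) = 1 + q + ⋯ + q^a` and `s_q(a,b,i) = p^{ie-b}·(1 + q + ⋯ + q^{a-i})` for `i ≥ 1`. -/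
def sQ (p e a b i : ℕ) : ℕ :=
  if i = 0 then ∑ j ∈ Finset.range (a + 1), (p ^ e) ^ j
  else p ^ (i * e - b) * ∑ j ∈ Finset.range (a - i + 1), (p ^ e) ^ j

namespace Stmt5

def cap (p e b i : ℕ) : ℤ := if i = 0 then (p:ℤ) ^ (e - b) else (p:ℤ) ^ e

def G (p e a b : ℕ) : ℤ :=
  (a:ℤ) * (p:ℤ) ^ ((a + 1) * e - b) - ∑ j ∈ Finset.range (a + 1), ((p:ℤ) ^ e) ^ j

lemma sQ_zero (p e a b : ℕ) :
    (sQ p e a b 0 : ℤ) = ∑ j ∈ Finset.range (a+1), ((p:ℤ)^e)^j := by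
  simp [sQ]

lemma sQ_succ (p e a b i : ℕ) (hbe : b ≤ e) :
    (sQ p e (a+1) b (i+1) : ℤ) = (p:ℤ)^(e-b) * (sQ p e a 0 i : ℤ) := by
  rcases Nat.eq_zero_or_pos i with h | h
  · subst h
    simp only [sQ, if_neg (Nat.one_ne_zero), if_pos rfl, one_mul,
      Nat.add_sub_cancel]
    push_cast
    ring_nf
  · have hi : i ≠ 0 := h.ne'
    simp only [sQ, if_neg (Nat.succ_ne_zero i), if_neg hi]
    have h1 : (i+1) * e - b = (e - b) + i * e := by
      rw [show (i+1)*e = i*e + e by ring, Nat.add_sub_assoc hbe, Nat.add_comm]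
    have h2 : a + 1 - (i + 1) = a - i := by omega
    rw [h1, h2, Nat.sub_zero, pow_add]
    push_cast
    ring

lemma sQ_top (p e a : ℕ) : (sQ p e a 0 a : ℤ) = (p:ℤ)^(a*e) := by
  rcases Nat.eq_zero_or_pos a with h | h
  · subst h; simp [sQ]
  · simp [sQ, h.ne']

lemma sQ_nonneg (p e a b i : ℕ) : (0:ℤ) ≤ (sQ p e a b i : ℤ) := Int.natCast_nonneg _

lemma G_succ (p e a b : ℕ) (hbe : b ≤ e) :
    G p e (a+1) b = ((p:ℤ)^(e-b) - 1) * (sQ p e (a+1) b 0 : ℤ) + (p:ℤ)^(e-b) * G p e a 0 := by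
  rw [sQ_zero]
  unfold G
  rw [Finset.sum_range_succ ((((p:ℤ)^e)^·)) (a+1)]
  have h1 : (a+1+1) * e - b = (e - b) + (a+1) * e := by
    rw [show (a+1+1)*e = (a+1)*e + e by ring, Nat.add_sub_assoc hbe, Nat.add_comm]
  have h2 : (a+1) * e - 0 = (a+1) * e := by omega
  rw [h1, h2, pow_add]
  have h3 : (p:ℤ) ^ ((a+1)*e) = ((p:ℤ)^e)^(a+1) := by rw [← pow_mul, Nat.mul_comm]
  rw [h3]
  push_cast
  ring

lemma sQ_zero_mod (p e a b : ℕ) (hbe : b ≤ e) :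
    ((p:ℤ)^(e-b)) ∣ (sQ p e a b 0 : ℤ) - 1 := by
  have h : (sQ p e a b 0 : ℤ) - 1 = (∑ j ∈ Finset.range a, ((p:ℤ)^e)^j) * (p:ℤ)^e := by
    rw [sQ_zero, Finset.sum_range_succ']
    simp [pow_succ, Finset.sum_mul]
  rw [h]
  exact Dvd.dvd.mul_left (pow_dvd_pow _ (by omega)) _

lemma exists_rep (p e : ℕ) (hp1 : 1 ≤ p) :
    ∀ a b, b ≤ e → ∀ m : ℤ, ∃ c : ℕ → ℤ,
      (∀ i < a, 0 ≤ c i ∧ c i < cap p e b i) ∧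
      m = ∑ i ∈ Finset.range (a+1), c i * (sQ p e a b i : ℤ) := by
  intro a
  induction a with
  | zero =>
    intro b hb m
    refine ⟨fun _ => m, fun i hi => absurd hi (Nat.not_lt_zero i), ?_⟩
    simp [sQ]
  | succ a ih =>
    intro b hb m
    set P : ℤ := (p:ℤ)^(e-b) with hPdef
    have hP0 : 0 < P := pow_pos (by exact_mod_cast hp1) _
    set σ : ℤ := (sQ p e (a+1) b 0 : ℤ) with hσdef
    have hσ : P ∣ σ - 1 := sQ_zero_mod p e (a+1) b hb
    set c0 : ℤ := m % P with hc0def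
    have hc0 : 0 ≤ c0 ∧ c0 < P := ⟨Int.emod_nonneg m hP0.ne', Int.emod_lt_of_pos m hP0⟩
    have hdvd : P ∣ m - c0 * σ := by
      have h1 : P ∣ m - c0 := Int.dvd_self_sub_of_emod_eq rfl
      have h2 : m - c0 * σ = (m - c0) - c0 * (σ - 1) := by ring
      rw [h2]
      exact dvd_sub h1 (Dvd.dvd.mul_left hσ c0)
    obtain ⟨m', hm'⟩ := hdvd
    obtain ⟨c', hc', hsum⟩ := ih 0 (Nat.zero_le e) m'
    refine ⟨fun i => if i = 0 then c0 else c' (i-1), ?_, ?_⟩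
    · intro i hi
      dsimp only
      rcases Nat.eq_zero_or_pos i with h | h
      · subst h; simpa [cap] using hc0
      · obtain ⟨j, rfl⟩ : ∃ j, i = j + 1 := ⟨i - 1, by omega⟩
        rw [if_neg (Nat.succ_ne_zero j), Nat.add_sub_cancel]
        have hj : j < a := by omega
        have := hc' j hj
        constructor
        · exact this.1
        · calc c' j < cap p e 0 j := this.2
            _ = cap p e b (j+1) := by simp [cap]
    · rw [Finset.sum_range_succ']
      have : ∀ i ∈ Finset.range (a+1),
          (if i + 1 = 0 then c0 else c' (i+1-1)) * (sQ p e (a+1) b (i+1) : ℤ)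
          = P * (c' i * (sQ p e a 0 i : ℤ)) := by
        intro i _
        rw [if_neg (Nat.succ_ne_zero i), Nat.add_sub_cancel, sQ_succ p e a b i hb]
        ring
      rw [Finset.sum_congr rfl this, ← Finset.mul_sum, ← hsum]
      simp only [ite_true, if_pos]
      rw [← hσdef]
      linarith [hm']

lemma cap_zero (p e i : ℕ) : cap p e 0 i = (p:ℤ)^e := by simp [cap]

lemma G_eq_sum (p e : ℕ) :
    ∀ a b, b ≤ e → G p e a b =
      (∑ i ∈ Finset.range a, (cap p e b i - 1) * (sQ p e a b i : ℤ)) - (sQ p e a b a : ℤ) := by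
  intro a
  induction a with
  | zero =>
    intro b hb
    simp [G, sQ]
  | succ a ih =>
    intro b hb
    rw [G_succ p e a b hb, ih 0 (Nat.zero_le e)]
    rw [Finset.sum_range_succ' (fun i => (cap p e b i - 1) * (sQ p e (a+1) b i : ℤ)) a]
    have h1 : ∀ i ∈ Finset.range a,
        (cap p e b (i+1) - 1) * (sQ p e (a+1) b (i+1) : ℤ)
        = (p:ℤ)^(e-b) * ((cap p e 0 i - 1) * (sQ p e a 0 i : ℤ)) := by
      intro i _
      rw [sQ_succ p e a b i hb, cap_zero]
      have : cap p e b (i+1) = (p:ℤ)^e := by simp [cap]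
      rw [this]
      ring
    rw [Finset.sum_congr rfl h1, ← Finset.mul_sum]
    rw [sQ_succ p e a b a hb]
    have h2 : cap p e b 0 = (p:ℤ)^(e-b) := by simp [cap]
    rw [h2]
    ring

lemma not_rep (p e : ℕ) (hp1 : 1 ≤ p) :
    ∀ a b, b ≤ e → ¬ ∃ n : ℕ → ℕ,
      G p e a b = ∑ i ∈ Finset.range (a+1), (n i : ℤ) * (sQ p e a b i : ℤ) := by
  intro a
  induction a with
  | zero =>
    rintro b hb ⟨n, hn⟩
    have h0 : (sQ p e 0 b 0 : ℤ) = 1 := by simp [sQ]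
    rw [G] at hn
    simp [h0] at hn
  | succ a ih =>
    rintro b hb ⟨n, hn⟩
    set P : ℤ := (p:ℤ)^(e-b) with hPdef
    have hP0 : 0 < P := pow_pos (by exact_mod_cast hp1) _
    set σ : ℤ := (sQ p e (a+1) b 0 : ℤ) with hσdef
    have hσ : P ∣ σ - 1 := by
      have h : σ - 1 = (∑ j ∈ Finset.range (a+1), ((p:ℤ)^e)^j) * (p:ℤ)^e := by
        rw [hσdef, sQ_zero, Finset.sum_range_succ']
        simp [pow_succ, Finset.sum_mul]
      rw [h]
      exact Dvd.dvd.mul_left (pow_dvd_pow _ (by omega)) _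
    -- split sum
    set T : ℤ := ∑ i ∈ Finset.range (a+1), (n (i+1) : ℤ) * (sQ p e a 0 i : ℤ) with hTdef
    have hsplit : G p e (a+1) b = P * T + (n 0 : ℤ) * σ := by
      rw [hn, Finset.sum_range_succ']
      congr 1
      rw [hTdef, Finset.mul_sum]
      refine Finset.sum_congr rfl fun i _ => ?_
      rw [sQ_succ p e a b i hb]
      ring
    rw [G_succ p e a b hb] at hsplit
    -- P ∣ n 0 + 1
    have key : ((n 0 : ℤ) + 1 - P) * σ = P * (G p e a 0 - T) := by linarith [hsplit]
    have hdvd : P ∣ (n 0 : ℤ) + 1 := by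
      have h1 : P ∣ ((n 0 : ℤ) + 1 - P) * σ := ⟨_, key.trans rfl⟩
      have h2 : (n 0 : ℤ) + 1 = ((n 0 : ℤ) + 1 - P) * σ - ((n 0 : ℤ) + 1 - P) * (σ - 1) + P := by
        ring
      rw [h2]
      exact dvd_add (dvd_sub h1 (Dvd.dvd.mul_left hσ _)) dvd_rfl
    obtain ⟨t, ht⟩ := hdvd
    have ht1 : 1 ≤ t := by nlinarith [Int.natCast_nonneg (n 0)]
    set k : ℤ := t - 1 with hkdef
    have hk0 : 0 ≤ k := by omega
    obtain ⟨k', hk'⟩ : ∃ k' : ℕ, (k' : ℤ) = k := ⟨k.toNat, Int.toNat_of_nonneg hk0⟩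
    -- G a 0 = k σ + T
    have hGa : G p e a 0 = k * σ + T := by
      have hn0 : (n 0 : ℤ) = P * k + P - 1 := by rw [hkdef]; linarith [ht]
      rw [hn0] at key
      have : P * (k * σ) = P * (G p e a 0 - T) := by linarith [key]
      have := mul_left_cancel₀ hP0.ne' this
      linarith
    -- σ = s'_0 + p^e * s'_a
    have hσs : σ = (sQ p e a 0 0 : ℤ) + (p:ℤ)^e * (sQ p e a 0 a : ℤ) := by
      rw [hσdef, sQ_zero, sQ_zero, sQ_top, Finset.sum_range_succ]
      rw [show (p:ℤ)^e * (p:ℤ)^(a*e) = ((p:ℤ)^e)^(a+1) from by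
        rw [← pow_add, ← pow_mul]; congr 1; ring]
    -- build new representation
    refine ih 0 (Nat.zero_le e) ⟨fun i => n (i+1) + (if i = 0 then k' else 0) + (if i = a then k' * p^e else 0), ?_⟩
    have expand : ∀ i ∈ Finset.range (a+1),
        ((n (i+1) + (if i = 0 then k' else 0) + (if i = a then k' * p^e else 0) : ℕ) : ℤ)
          * (sQ p e a 0 i : ℤ)
        = (n (i+1) : ℤ) * (sQ p e a 0 i : ℤ)
          + (if i = 0 then (k' : ℤ) * (sQ p e a 0 i : ℤ) else 0)
          + (if i = a then (k' : ℤ) * (p:ℤ)^e * (sQ p e a 0 i : ℤ) else 0) := by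
      intro i _
      push_cast
      split_ifs <;> ring
    rw [Finset.sum_congr rfl expand]
    rw [Finset.sum_add_distrib, Finset.sum_add_distrib]
    rw [Finset.sum_ite_eq' (Finset.range (a+1)) 0 (fun i => (k' : ℤ) * (sQ p e a 0 i : ℤ))]
    rw [Finset.sum_ite_eq' (Finset.range (a+1)) a (fun i => (k' : ℤ) * (p:ℤ)^e * (sQ p e a 0 i : ℤ))]
    rw [if_pos (Finset.mem_range.mpr (Nat.succ_pos a)), if_pos (Finset.mem_range.mpr (Nat.lt_succ_self a))]
    rw [hGa, hσs, hk']
    ring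

lemma sQ_pos (p e a b i : ℕ) (hp1 : 1 ≤ p) : (0:ℤ) < (sQ p e a b i : ℤ) := by
  have hq : 0 < p ^ e := Nat.pow_pos hp1
  have hsum : ∀ n : ℕ, 0 < ∑ j ∈ Finset.range (n + 1), (p ^ e) ^ j := by
    intro n
    exact Finset.sum_pos (fun j _ => Nat.pow_pos hq) (by simp)
  have : 0 < sQ p e a b i := by
    unfold sQ
    split
    · exact hsum a
    · exact Nat.mul_pos (Nat.pow_pos hp1) (hsum (a - i))
  exact_mod_cast this

end Stmt5

theorem stmt_5 (p e a b : ℕ) (hp : p.Prime) (he : 1 ≤ e) (ha : 1 ≤ a) (hb : b ≤ e - 1)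
    (g : ℤ)
    (hg : g = (a : ℤ) * (p : ℤ) ^ ((a + 1) * e - b) -
      ∑ j ∈ Finset.range (a + 1), ((p : ℤ) ^ e) ^ j) :
    (¬ ∃ c : Fin (a + 1) → ℕ, g = ∑ i : Fin (a + 1), (c i : ℤ) * (sQ p e a b i : ℤ)) ∧
    ∀ m : ℤ, g < m → ∃ c : Fin (a + 1) → ℕ,
      m = ∑ i : Fin (a + 1), (c i : ℤ) * (sQ p e a b i : ℤ) := by
  have hbe : b ≤ e := by omega
  have hp1 : 1 ≤ p := hp.pos
  have hGg : g = Stmt5.G p e a b := hg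
  constructor
  · rintro ⟨c, hc⟩
    apply Stmt5.not_rep p e hp1 a b hbe
    refine ⟨fun j => if h : j < a + 1 then c ⟨j, h⟩ else 0, ?_⟩
    rw [← hGg, hc,
      ← Fin.sum_univ_eq_sum_range
        (fun j => (((if h : j < a + 1 then c ⟨j, h⟩ else 0 : ℕ)) : ℤ) * (sQ p e a b j : ℤ)) (a+1)]
    exact Finset.sum_congr rfl fun i _ => by simp [i.isLt]
  · intro m hm
    obtain ⟨c, hcon, hsum⟩ := Stmt5.exists_rep p e hp1 a b hbe m
    have hGs := Stmt5.G_eq_sum p e a b hbe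
    have hsa : (0:ℤ) < (sQ p e a b a : ℤ) := Stmt5.sQ_pos p e a b a hp1
    have key : m - Stmt5.G p e a b =
        (∑ i ∈ Finset.range a, (c i - (Stmt5.cap p e b i - 1)) * (sQ p e a b i : ℤ))
          + (c a + 1) * (sQ p e a b a : ℤ) := by
      rw [hsum, Finset.sum_range_succ, hGs]
      have h : ∀ i ∈ Finset.range a,
          (c i - (Stmt5.cap p e b i - 1)) * (sQ p e a b i : ℤ)
          = c i * (sQ p e a b i : ℤ) - (Stmt5.cap p e b i - 1) * (sQ p e a b i : ℤ) := by
        intro i _; ring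
      rw [Finset.sum_congr rfl h, Finset.sum_sub_distrib]
      ring
    have hneg : (∑ i ∈ Finset.range a,
        (c i - (Stmt5.cap p e b i - 1)) * (sQ p e a b i : ℤ)) ≤ 0 := by
      apply Finset.sum_nonpos
      intro i hi
      have hci := hcon i (Finset.mem_range.mp hi)
      have h1 : c i - (Stmt5.cap p e b i - 1) ≤ 0 := by omega
      exact mul_nonpos_iff.mpr (Or.inr ⟨h1, Int.natCast_nonneg _⟩)
    have hca : 0 ≤ c a := by
      by_contra hca
      push_neg at hca
      have h1 : c a + 1 ≤ 0 := by omega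
      have h2 : (c a + 1) * (sQ p e a b a : ℤ) ≤ 0 :=
        mul_nonpos_iff.mpr (Or.inr ⟨h1, Int.natCast_nonneg _⟩)
      rw [← hGg] at key
      linarith
    refine ⟨fun i => (c i.val).toNat, ?_⟩
    rw [hsum, ← Fin.sum_univ_eq_sum_range (fun j => c j * (sQ p e a b j : ℤ)) (a+1)]
    refine Finset.sum_congr rfl fun i _ => ?_
    congr 1
    rw [Int.toNat_of_nonneg]
    rcases Nat.lt_succ_iff_lt_or_eq.mp i.isLt with h | h
    · exact (hcon _ h).1
    · rw [h]; exact hca
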